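/- Let (R, m) be a regular local ring, let a be an element of m, and let b be an element of m that does not lie in m². Then the quotient ring S = R[X]/(X² + aX + b) is a regular local ring. -/

import Mathlib

/-- A commutative ring is a regular local ring if it is a Noetherian local ring
whose Krull dimension equals the dimension of its cotangent space `m/m²` as a
vector space over the residue field (equivalently, the maximal ideal is
generated by `dim R` elements). -/
class IsRegularLocalRing' (R : Type*) [CommRing R] extends
    IsLocalRing R, IsNoetherianRing R : Prop where
  regular : ringKrullDim R =
    Module.finrank (IsLocalRing.ResidueField R) (IsLocalRing.CotangentSpace R)

open Polynomial IsLocalRing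

namespace Stmt4Aux

variable {R : Type*} [CommRing R]

noncomputable abbrev fab (a b : R) : R[X] := X ^ 2 + C a * X + C b

lemma monic_fab (a b : R) : (fab a b).Monic := by
  unfold fab; monicity!

lemma degree_fab (a b : R) [Nontrivial R] : (fab a b).degree = 2 := by
  unfold fab; compute_degree!

variable (a b : R)

noncomputable def cf : AdjoinRoot (fab a b) →ₗ[R] R :=
  (lcoeff R 0).comp (AdjoinRoot.modByMonicHom (monic_fab a b))

noncomputable def df : AdjoinRoot (fab a b) →ₗ[R] R :=
  (lcoeff R 1).comp (AdjoinRoot.modByMonicHom (monic_fab a b))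

lemma degree_lin_lt [Nontrivial R] (c d : R) : (C c + C d * X).degree < (fab a b).degree := by
  rw [degree_fab]
  have : (C c + C d * X).degree ≤ 1 := by compute_degree
  exact lt_of_le_of_lt this (by norm_num)

lemma of_add_of_mul_root (c d : R) :
    AdjoinRoot.of (fab a b) c + AdjoinRoot.of (fab a b) d * AdjoinRoot.root (fab a b)
      = AdjoinRoot.mk (fab a b) (C c + C d * X) := by
  rw [map_add, map_mul]
  rfl

lemma cf_apply [Nontrivial R] (c d : R) :
    cf a b (AdjoinRoot.of (fab a b) c + AdjoinRoot.of (fab a b) d * AdjoinRoot.root (fab a b))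
      = c := by
  rw [of_add_of_mul_root, cf]
  simp only [LinearMap.coe_comp, Function.comp_apply, AdjoinRoot.modByMonicHom_mk]
  rw [(modByMonic_eq_self_iff (monic_fab a b)).mpr (degree_lin_lt a b c d)]
  simp

lemma df_apply [Nontrivial R] (c d : R) :
    df a b (AdjoinRoot.of (fab a b) c + AdjoinRoot.of (fab a b) d * AdjoinRoot.root (fab a b))
      = d := by
  rw [of_add_of_mul_root, df]
  simp only [LinearMap.coe_comp, Function.comp_apply, AdjoinRoot.modByMonicHom_mk]
  rw [(modByMonic_eq_self_iff (monic_fab a b)).mpr (degree_lin_lt a b c d)]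
  simp

lemma rep [Nontrivial R] (s : AdjoinRoot (fab a b)) :
    s = AdjoinRoot.of (fab a b) (cf a b s)
        + AdjoinRoot.of (fab a b) (df a b s) * AdjoinRoot.root (fab a b) := by
  obtain ⟨p, rfl⟩ := AdjoinRoot.mk_surjective s
  have h1 : AdjoinRoot.mk (fab a b) p = AdjoinRoot.mk (fab a b) (p %ₘ fab a b) := by
    rw [AdjoinRoot.mk_eq_mk, modByMonic_eq_sub_mul_div _ (fab a b)]
    exact ⟨p /ₘ fab a b, by ring⟩
  have hdeg : (p %ₘ fab a b).degree ≤ 1 := by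
    have := degree_modByMonic_lt p (monic_fab a b)
    rw [degree_fab] at this
    exact Order.le_of_lt_succ (by exact_mod_cast this)
  have h2 : p %ₘ fab a b = C ((p %ₘ fab a b).coeff 1) * X + C ((p %ₘ fab a b).coeff 0) :=
    eq_X_add_C_of_degree_le_one hdeg
  have hcf : cf a b (AdjoinRoot.mk (fab a b) p) = (p %ₘ fab a b).coeff 0 := by
    simp [cf, AdjoinRoot.modByMonicHom_mk]
  have hdf : df a b (AdjoinRoot.mk (fab a b) p) = (p %ₘ fab a b).coeff 1 := by
    simp [df, AdjoinRoot.modByMonicHom_mk]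
  rw [hcf, hdf, of_add_of_mul_root, h1]
  conv_lhs => rw [h2]
  exact congrArg _ (by ring)


section Local
variable [IsLocalRing R]

lemma mul_rep (c d c' d' : R) :
    (AdjoinRoot.of (fab a b) c + AdjoinRoot.of (fab a b) d * AdjoinRoot.root (fab a b)) *
      (AdjoinRoot.of (fab a b) c' + AdjoinRoot.of (fab a b) d' * AdjoinRoot.root (fab a b))
    = AdjoinRoot.of (fab a b) (c * c' - d * d' * b)
        + AdjoinRoot.of (fab a b) (c * d' + c' * d - d * d' * a) * AdjoinRoot.root (fab a b) := by
  rw [of_add_of_mul_root, of_add_of_mul_root, of_add_of_mul_root, ← map_mul,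
    AdjoinRoot.mk_eq_mk]
  exact ⟨C d * C d', by simp only [map_sub, map_add, map_mul]; ring⟩

lemma isUnit_of_cf_notMem (ha : a ∈ maximalIdeal R) (hb : b ∈ maximalIdeal R)
    {c : R} (d : R) (hc : c ∉ maximalIdeal R) :
    IsUnit (AdjoinRoot.of (fab a b) c + AdjoinRoot.of (fab a b) d * AdjoinRoot.root (fab a b)) := by
  set u : R := c * (c - d * a) + d * d * b with hu
  have hum : u ∉ maximalIdeal R := by
    intro h
    apply hc
    have h2 : c * c - u ∈ maximalIdeal R := by
      have : c * c - u = c * d * a - d * d * b := by rw [hu]; ring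
      rw [this]
      exact sub_mem (Ideal.mul_mem_left _ _ ha) (Ideal.mul_mem_left _ _ hb)
    have h3 : c * c ∈ maximalIdeal R := by
      have := add_mem h2 h
      simpa using this
    rcases (Ideal.IsPrime.mul_mem_iff_mem_or_mem (inferInstance)).mp h3 with h4 | h4 <;> exact h4
  have huu : IsUnit u := by
    by_contra h
    exact hum (IsLocalRing.mem_maximalIdeal u |>.mpr h)
  have key := mul_rep a b c d (c - d * a) (-d)
  rw [show c * (c - d * a) - d * (-d) * b = u by rw [hu]; ring,
    show c * (-d) + (c - d * a) * d - d * (-d) * a = 0 by ring] at key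
  simp only [map_zero, zero_mul, add_zero] at key
  exact isUnit_of_mul_isUnit_left (key ▸ (huu.map (AdjoinRoot.of (fab a b))))

lemma eval_fab_zero (hb : b ∈ maximalIdeal R) :
    (fab a b).eval₂ (IsLocalRing.residue R) 0 = 0 := by
  simp only [fab, eval₂_add, eval₂_mul, eval₂_pow, eval₂_X, eval₂_C]
  have : IsLocalRing.residue R b = 0 := Ideal.Quotient.eq_zero_iff_mem.mpr hb
  simp [this]

noncomputable def phi (hb : b ∈ maximalIdeal R) :
    AdjoinRoot (fab a b) →+* ResidueField R :=
  AdjoinRoot.lift (IsLocalRing.residue R) 0 (eval_fab_zero a b hb)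

lemma phi_apply (hb : b ∈ maximalIdeal R) (c d : R) :
    phi a b hb (AdjoinRoot.of (fab a b) c + AdjoinRoot.of (fab a b) d * AdjoinRoot.root (fab a b))
      = IsLocalRing.residue R c := by
  rw [map_add, map_mul, phi, AdjoinRoot.lift_of, AdjoinRoot.lift_of, AdjoinRoot.lift_root]
  simp

lemma nonunit_iff (ha : a ∈ maximalIdeal R) (hb : b ∈ maximalIdeal R) (c d : R) :
    (AdjoinRoot.of (fab a b) c + AdjoinRoot.of (fab a b) d * AdjoinRoot.root (fab a b))
      ∈ nonunits (AdjoinRoot (fab a b)) ↔ c ∈ maximalIdeal R := by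
  constructor
  · intro h
    by_contra hc
    exact h (isUnit_of_cf_notMem a b ha hb d hc)
  · intro hc hunit
    have := hunit.map (phi a b hb)
    rw [phi_apply] at this
    rw [show IsLocalRing.residue R c = 0 from Ideal.Quotient.eq_zero_iff_mem.mpr hc] at this
    exact not_isUnit_zero this

lemma nontrivS : Nontrivial (AdjoinRoot (fab a b)) := by
  refine ⟨1, 0, fun h => one_ne_zero (α := R) ?_⟩
  have h1 : (1 : AdjoinRoot (fab a b))
      = AdjoinRoot.of (fab a b) 1 + AdjoinRoot.of (fab a b) 0 * AdjoinRoot.root (fab a b) := by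
    simp
  calc (1 : R) = cf a b (1 : AdjoinRoot (fab a b)) := by rw [h1, cf_apply]
  _ = cf a b 0 := by rw [h]
  _ = 0 := map_zero _

lemma mem_nonunits_iff_cf (ha : a ∈ maximalIdeal R) (hb : b ∈ maximalIdeal R)
    (s : AdjoinRoot (fab a b)) :
    s ∈ nonunits (AdjoinRoot (fab a b)) ↔ cf a b s ∈ maximalIdeal R := by
  constructor
  · intro h
    rw [rep a b s] at h
    exact (nonunit_iff a b ha hb _ _).mp h
  · intro h
    rw [rep a b s]
    exact (nonunit_iff a b ha hb _ _).mpr h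

lemma isLocalRing_S (ha : a ∈ maximalIdeal R) (hb : b ∈ maximalIdeal R) :
    IsLocalRing (AdjoinRoot (fab a b)) := by
  haveI := nontrivS a b
  apply IsLocalRing.of_nonunits_add
  intro s t hs ht
  rw [mem_nonunits_iff_cf a b ha hb] at hs ht ⊢
  rw [map_add]
  exact add_mem hs ht

lemma mem_maximalIdeal_iff (ha : a ∈ maximalIdeal R) (hb : b ∈ maximalIdeal R)
    [IsLocalRing (AdjoinRoot (fab a b))] (s : AdjoinRoot (fab a b)) :
    s ∈ maximalIdeal (AdjoinRoot (fab a b)) ↔ cf a b s ∈ maximalIdeal R :=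
  mem_nonunits_iff_cf a b ha hb s

end Local


section Coord
variable [Nontrivial R]

lemma cf_of (c : R) : cf a b (AdjoinRoot.of (fab a b) c) = c := by
  conv_lhs => rw [show AdjoinRoot.of (fab a b) c
    = AdjoinRoot.of (fab a b) c
      + AdjoinRoot.of (fab a b) 0 * AdjoinRoot.root (fab a b) by simp]
  rw [cf_apply]

lemma of_injective : Function.Injective (algebraMap R (AdjoinRoot (fab a b))) := by
  intro c c' h
  rw [AdjoinRoot.algebraMap_eq] at h
  rw [← cf_of a b c, ← cf_of a b c', h]

end Coord

section Dim
variable [Nontrivial R]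

lemma moduleFinite : Module.Finite R (AdjoinRoot (fab a b)) :=
  Module.Finite.of_basis (AdjoinRoot.powerBasis' (monic_fab a b)).basis

lemma isNoetherianS [IsNoetherianRing R] : IsNoetherianRing (AdjoinRoot (fab a b)) := by
  have : IsNoetherianRing R[X] := inferInstance
  exact isNoetherianRing_of_surjective R[X] _ (AdjoinRoot.mk (fab a b))
    AdjoinRoot.mk_surjective

lemma isIntegralS : Algebra.IsIntegral R (AdjoinRoot (fab a b)) := by
  haveI := moduleFinite a b
  exact Algebra.IsIntegral.of_finite R _

lemma dim_le : ringKrullDim (AdjoinRoot (fab a b)) ≤ ringKrullDim R := by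
  haveI := isIntegralS a b
  apply Order.krullDim_le_of_strictMono
    (fun q : PrimeSpectrum (AdjoinRoot (fab a b)) =>
      (⟨q.asIdeal.comap (algebraMap R _), Ideal.IsPrime.comap _⟩ : PrimeSpectrum R))
  intro p q hpq
  rw [← PrimeSpectrum.asIdeal_lt_asIdeal] at hpq ⊢
  obtain ⟨x, hxq, hxp⟩ := SetLike.exists_of_lt hpq
  exact Ideal.comap_lt_comap_of_integral_mem_sdiff hpq.le ⟨hxq, hxp⟩
    (Algebra.IsIntegral.isIntegral x)

lemma ker_bot : RingHom.ker (algebraMap R (AdjoinRoot (fab a b))) = ⊥ :=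
  (RingHom.injective_iff_ker_eq_bot _).mp (of_injective a b)

lemma chain_lift (n : ℕ) :
    ∀ p : LTSeries (PrimeSpectrum R), p.length = n →
      ∃ q : LTSeries (PrimeSpectrum (AdjoinRoot (fab a b))),
        q.length = n ∧ q.last.asIdeal.comap (algebraMap R _) = p.last.asIdeal := by
  haveI := isIntegralS a b
  induction n with
  | zero =>
    intro p _
    obtain ⟨Q, _, hQprime, hQcomap⟩ :=
      Ideal.exists_ideal_over_prime_of_isIntegral p.last.asIdeal ⊥
        (by rw [show (⊥ : Ideal (AdjoinRoot (fab a b))).comap (algebraMap R _)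
              = RingHom.ker (algebraMap R (AdjoinRoot (fab a b))) from rfl, ker_bot]
            exact bot_le)
    exact ⟨RelSeries.singleton _ ⟨Q, hQprime⟩, rfl, hQcomap⟩
  | succ n ih =>
    intro p hp
    obtain ⟨q, hqlen, hqcomap⟩ := ih p.eraseLast (by simp [hp])
    have hrel : p.eraseLast.last < p.last := p.eraseLast_last_rel_last (by omega)
    obtain ⟨Q, hQge, hQprime, hQcomap⟩ :=
      Ideal.exists_ideal_over_prime_of_isIntegral p.last.asIdeal q.last.asIdeal
        (by rw [hqcomap]; exact le_of_lt hrel)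
    have hlt : q.last < (⟨Q, hQprime⟩ : PrimeSpectrum (AdjoinRoot (fab a b))) := by
      rw [← PrimeSpectrum.asIdeal_lt_asIdeal]
      refine lt_of_le_of_ne hQge fun e => ?_
      apply hrel.ne
      have : p.eraseLast.last.asIdeal = p.last.asIdeal := by rw [← hqcomap, e, hQcomap]
      exact PrimeSpectrum.ext this
    refine ⟨q.snoc _ hlt, by simp [hqlen], ?_⟩
    rw [RelSeries.last_snoc]
    exact hQcomap

lemma dim_ge : ringKrullDim R ≤ ringKrullDim (AdjoinRoot (fab a b)) := by
  have key : ∀ p : LTSeries (PrimeSpectrum R),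
      (p.length : WithBot ℕ∞) ≤ ringKrullDim (AdjoinRoot (fab a b)) := by
    intro p
    obtain ⟨q, hq, -⟩ := chain_lift a b p.length p rfl
    have := Order.LTSeries.length_le_krullDim q
    rw [hq] at this
    exact this
  exact iSup_le key

lemma dim_eq : ringKrullDim (AdjoinRoot (fab a b)) = ringKrullDim R :=
  le_antisymm (dim_le a b) (dim_ge a b)

end Dim


section Cot

open Module Submodule

variable [IsLocalRing R]

lemma cf_root : cf a b (AdjoinRoot.root (fab a b)) = 0 := by
  conv_lhs => rw [show AdjoinRoot.root (fab a b)
    = AdjoinRoot.of (fab a b) 0 + AdjoinRoot.of (fab a b) 1 * AdjoinRoot.root (fab a b) by simp]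
  rw [cf_apply]

lemma df_root : df a b (AdjoinRoot.root (fab a b)) = 1 := by
  conv_lhs => rw [show AdjoinRoot.root (fab a b)
    = AdjoinRoot.of (fab a b) 0 + AdjoinRoot.of (fab a b) 1 * AdjoinRoot.root (fab a b) by simp]
  rw [df_apply]

lemma df_of (c : R) : df a b (AdjoinRoot.of (fab a b) c) = 0 := by
  conv_lhs => rw [show AdjoinRoot.of (fab a b) c
    = AdjoinRoot.of (fab a b) c
      + AdjoinRoot.of (fab a b) 0 * AdjoinRoot.root (fab a b) by simp]
  rw [df_apply]

lemma root_mem_maximalIdeal (ha : a ∈ maximalIdeal R) (hb : b ∈ maximalIdeal R)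
    [IsLocalRing (AdjoinRoot (fab a b))] :
    AdjoinRoot.root (fab a b) ∈ maximalIdeal (AdjoinRoot (fab a b)) := by
  rw [mem_maximalIdeal_iff a b ha hb, cf_root]; exact zero_mem _

lemma of_mem_maximalIdeal (ha : a ∈ maximalIdeal R) (hb : b ∈ maximalIdeal R)
    [IsLocalRing (AdjoinRoot (fab a b))] {y : R} (hy : y ∈ maximalIdeal R) :
    algebraMap R (AdjoinRoot (fab a b)) y ∈ maximalIdeal (AdjoinRoot (fab a b)) := by
  rw [AdjoinRoot.algebraMap_eq, mem_maximalIdeal_iff a b ha hb, cf_of]; exact hy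

lemma of_b_eq : algebraMap R (AdjoinRoot (fab a b)) b
    = (-(AdjoinRoot.root (fab a b)) - algebraMap R (AdjoinRoot (fab a b)) a)
        * AdjoinRoot.root (fab a b) := by
  have h := AdjoinRoot.eval₂_root (fab a b)
  simp only [fab, eval₂_add, eval₂_mul, eval₂_pow, eval₂_X, eval₂_C] at h
  rw [AdjoinRoot.algebraMap_eq]
  linear_combination h

set_option maxHeartbeats 2000000 in
lemma finrank_eq [IsNoetherianRing R]
    [IsLocalRing (AdjoinRoot (fab a b))] [IsNoetherianRing (AdjoinRoot (fab a b))]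
    (ha : a ∈ maximalIdeal R) (hb : b ∈ maximalIdeal R)
    (hb2 : b ∉ maximalIdeal R ^ 2) :
    finrank (ResidueField (AdjoinRoot (fab a b))) (CotangentSpace (AdjoinRoot (fab a b)))
      = finrank (ResidueField R) (CotangentSpace R) := by
  classical
  haveI : Nontrivial R := inferInstance
  -- the R-side basis containing the class of b
  set β : CotangentSpace R := (maximalIdeal R).toCotangent ⟨b, hb⟩ with hβdef
  have hβ : β ≠ 0 := fun h => hb2 ((Ideal.toCotangent_eq_zero _ _).mp h)
  have hβli : LinearIndependent (ResidueField R)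
      (fun x : ({β} : Set (CotangentSpace R)) => (x : CotangentSpace R)) :=
    LinearIndepOn.singleton (v := id) hβ
  set t : Set (CotangentSpace R) := LinearIndepOn.extend (show LinearIndepOn (ResidueField R) id ({β} : Set (CotangentSpace R)) from hβli) (Set.subset_univ _) with htdef
  have hβt : β ∈ t := LinearIndepOn.subset_extend (show LinearIndepOn (ResidueField R) id ({β} : Set (CotangentSpace R)) from hβli) (Set.subset_univ _) rfl
  set B : Basis t (ResidueField R) (CotangentSpace R) := Basis.extend hβli with hBdef
  have hB : ∀ i : t, B i = (i : CotangentSpace R) := fun i => Basis.extend_apply_self hβli i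
  have hrangeB : Set.range ⇑B = (t : Set (CotangentSpace R)) := by
    have hBeq : ⇑B = fun i : t => (i : CotangentSpace R) := funext hB
    rw [hBeq, Subtype.range_coe]
  haveI : Fintype t := FiniteDimensional.fintypeBasisIndex B
  have hcard : Fintype.card t = finrank (ResidueField R) (CotangentSpace R) :=
    (Module.finrank_eq_card_basis B).symm
  -- lifts of the basis elements
  have wex : ∀ i : t, ∃ zz : maximalIdeal R,
      (maximalIdeal R).toCotangent zz = (i : CotangentSpace R)
        ∧ ((i : CotangentSpace R) = β → zz = ⟨b, hb⟩) := by
    intro i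
    by_cases h : (i : CotangentSpace R) = β
    · exact ⟨⟨b, hb⟩, by rw [h], fun _ => rfl⟩
    · obtain ⟨zz, hzz⟩ := Ideal.toCotangent_surjective (maximalIdeal R) (i : CotangentSpace R)
      exact ⟨zz, hzz, fun h' => absurd h' h⟩
  choose w hw1 hw2 using wex
  have hwspan : Submodule.span R (Set.range w) = ⊤ := by
    rw [← IsLocalRing.CotangentSpace.span_image_eq_top_iff]
    have himg : (maximalIdeal R).toCotangent '' Set.range w
        = Set.range ((↑) : t → CotangentSpace R) := by
      rw [← Set.range_comp]
      exact congrArg _ (funext fun i => hw1 i)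
    rw [himg, Subtype.range_coe, ← hrangeB]
    exact B.span_eq
  -- S-side generators
  set βt : t := ⟨β, hβt⟩ with hβtdef
  have hzmem : ∀ i : t,
      (if i = βt then AdjoinRoot.root (fab a b)
        else algebraMap R (AdjoinRoot (fab a b)) ((w i) : R))
        ∈ maximalIdeal (AdjoinRoot (fab a b)) := by
    intro i
    split
    · exact root_mem_maximalIdeal a b ha hb
    · exact of_mem_maximalIdeal a b ha hb (w i).2
  set z : t → maximalIdeal (AdjoinRoot (fab a b)) := fun i => ⟨_, hzmem i⟩ with hzdef
  have hzval : ∀ i, ((z i : AdjoinRoot (fab a b)))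
      = if i = βt then AdjoinRoot.root (fab a b)
        else algebraMap R (AdjoinRoot (fab a b)) ((w i) : R) := fun i => rfl
  set u : t → CotangentSpace (AdjoinRoot (fab a b)) :=
    fun i => (maximalIdeal (AdjoinRoot (fab a b))).toCotangent (z i) with hudef
  -- the ideal generated by the z i is the maximal ideal
  have hxE : AdjoinRoot.root (fab a b)
      ∈ Submodule.span (AdjoinRoot (fab a b)) (Set.range fun i => ((z i : AdjoinRoot (fab a b)))) := by
    apply Submodule.subset_span
    refine ⟨βt, ?_⟩
    show ((z βt : AdjoinRoot (fab a b))) = _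
    rw [hzval, if_pos rfl]
  have hof : ∀ y : R, y ∈ maximalIdeal R →
      algebraMap R (AdjoinRoot (fab a b)) y
        ∈ Submodule.span (AdjoinRoot (fab a b))
            (Set.range fun i => ((z i : AdjoinRoot (fab a b)))) := by
    intro y hy
    have hmem : (⟨y, hy⟩ : maximalIdeal R) ∈ Submodule.span R (Set.range w) := by
      rw [hwspan]; trivial
    refine Submodule.span_induction (R := R) (M := ↥(maximalIdeal R)) (s := Set.range w)
      (p := fun v _ => algebraMap R (AdjoinRoot (fab a b)) (v : R)
        ∈ Submodule.span (AdjoinRoot (fab a b))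
            (Set.range fun i => ((z i : AdjoinRoot (fab a b))))) ?_ ?_ ?_ ?_ hmem
    · rintro _ ⟨i, rfl⟩
      by_cases h : i = βt
      · rw [hw2 i (by rw [h])]
        show algebraMap R (AdjoinRoot (fab a b)) b ∈ _
        rw [of_b_eq]
        exact Ideal.mul_mem_left _ _ hxE
      · apply Submodule.subset_span
        refine ⟨i, ?_⟩
        show ((z i : AdjoinRoot (fab a b))) = _
        rw [hzval, if_neg h]
    · simp
    · intro p q hp hq hp' hq'
      rw [Submodule.coe_add, map_add]
      exact add_mem hp' hq'
    · intro r v hv hv'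
      rw [SetLike.val_smul, smul_eq_mul, map_mul]
      exact Ideal.mul_mem_left _ _ hv'
  have hzspan : Submodule.span (AdjoinRoot (fab a b)) (Set.range z) = ⊤ := by
    apply Submodule.map_injective_of_injective
      (Submodule.injective_subtype (maximalIdeal (AdjoinRoot (fab a b))))
    rw [Submodule.map_span, Submodule.map_top, Submodule.range_subtype, ← Set.range_comp]
    apply le_antisymm
    · rw [Submodule.span_le]
      rintro _ ⟨i, rfl⟩
      exact (z i).2
    · intro s hs
      have hcfs : cf a b s ∈ maximalIdeal R := (mem_maximalIdeal_iff a b ha hb s).mp hs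
      rw [rep a b s]
      refine add_mem ?_ ?_
      · rw [← AdjoinRoot.algebraMap_eq]
        exact hof _ hcfs
      · rw [← AdjoinRoot.algebraMap_eq]
        exact Ideal.mul_mem_left _ _ hxE
  -- upper bound
  have hspan' : Submodule.span (ResidueField (AdjoinRoot (fab a b)))
      ((maximalIdeal (AdjoinRoot (fab a b))).toCotangent '' Set.range z) = ⊤ :=
    (IsLocalRing.CotangentSpace.span_image_eq_top_iff).mpr hzspan
  have huapp : ∀ i, u i = (maximalIdeal (AdjoinRoot (fab a b))).toCotangent (z i) :=
    fun i => rfl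
  have hurange : Set.range u
      = (maximalIdeal (AdjoinRoot (fab a b))).toCotangent '' Set.range z := by
    ext v
    constructor
    · rintro ⟨i, rfl⟩
      exact ⟨z i, ⟨i, rfl⟩, rfl⟩
    · rintro ⟨w', ⟨i, rfl⟩, rfl⟩
      exact ⟨i, rfl⟩
  have upper : finrank (ResidueField (AdjoinRoot (fab a b)))
      (CotangentSpace (AdjoinRoot (fab a b))) ≤ finrank (ResidueField R) (CotangentSpace R) := by
    rw [← hcard]
    have h2 : finrank (ResidueField (AdjoinRoot (fab a b)))
        (CotangentSpace (AdjoinRoot (fab a b)))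
        = finrank (ResidueField (AdjoinRoot (fab a b)))
            (⊤ : Submodule (ResidueField (AdjoinRoot (fab a b)))
              (CotangentSpace (AdjoinRoot (fab a b)))) := (finrank_top _ _).symm
    rw [h2, ← hspan', ← hurange]
    exact finrank_range_le_card u
  -- coordinates of elements of the square of the maximal ideal
  have hM2 : ∀ s : AdjoinRoot (fab a b), s ∈ (maximalIdeal (AdjoinRoot (fab a b))) ^ 2 →
      cf a b s ∈ (maximalIdeal R) ^ 2 ⊔ Ideal.span {b} ∧ df a b s ∈ maximalIdeal R := by
    intro s hs
    rw [pow_two] at hs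
    refine Submodule.mul_induction_on hs ?_ ?_
    · intro p hp q hq
      have hcp : cf a b p ∈ maximalIdeal R := (mem_maximalIdeal_iff a b ha hb p).mp hp
      have hcq : cf a b q ∈ maximalIdeal R := (mem_maximalIdeal_iff a b ha hb q).mp hq
      rw [rep a b p, rep a b q, mul_rep, cf_apply, df_apply]
      constructor
      · refine sub_mem ?_ ?_
        · apply Submodule.mem_sup_left
          rw [pow_two]
          exact Ideal.mul_mem_mul hcp hcq
        · exact Submodule.mem_sup_right (Ideal.mem_span_singleton'.mpr ⟨_, rfl⟩)
      · refine sub_mem (add_mem ?_ ?_) ?_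
        · exact Ideal.mul_mem_right _ _ hcp
        · exact Ideal.mul_mem_right _ _ hcq
        · exact Ideal.mul_mem_left _ _ ha
    · intro p q hp hq
      rw [map_add, map_add]
      exact ⟨add_mem hp.1 hq.1, add_mem hp.2 hq.2⟩
  -- linear maps computing coordinates on the maximal ideal
  set cfM : maximalIdeal (AdjoinRoot (fab a b)) →ₗ[R] R :=
    (cf a b).comp (((maximalIdeal (AdjoinRoot (fab a b))).subtype).restrictScalars R) with hcfM
  set dfM : maximalIdeal (AdjoinRoot (fab a b)) →ₗ[R] R :=
    (df a b).comp (((maximalIdeal (AdjoinRoot (fab a b))).subtype).restrictScalars R) with hdfM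
  have hcfz : ∀ i, cfM (z i) = if i = βt then 0 else ((w i) : R) := by
    intro i
    by_cases h : i = βt
    · rw [if_pos h, hcfM]
      simp only [LinearMap.coe_comp, Function.comp_apply, LinearMap.coe_restrictScalars,
        Submodule.coe_subtype, hzval, if_pos h]
      exact cf_root a b
    · rw [if_neg h, hcfM]
      simp only [LinearMap.coe_comp, Function.comp_apply, LinearMap.coe_restrictScalars,
        Submodule.coe_subtype, hzval, if_neg h, AdjoinRoot.algebraMap_eq]
      exact cf_of a b _
  have hdfz : ∀ i, dfM (z i) = if i = βt then 1 else 0 := by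
    intro i
    by_cases h : i = βt
    · rw [if_pos h, hdfM]
      simp only [LinearMap.coe_comp, Function.comp_apply, LinearMap.coe_restrictScalars,
        Submodule.coe_subtype, hzval, if_pos h]
      exact df_root a b
    · rw [if_neg h, hdfM]
      simp only [LinearMap.coe_comp, Function.comp_apply, LinearMap.coe_restrictScalars,
        Submodule.coe_subtype, hzval, if_neg h, AdjoinRoot.algebraMap_eq]
      exact df_of a b _
  -- linear independence
  have hres : ∀ (r0 : R) (v : CotangentSpace R),
      IsLocalRing.residue R r0 • v = r0 • v := fun r0 v =>
    algebraMap_smul (IsLocalRing.ResidueField R) r0 v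
  have hres' : ∀ (s0 : AdjoinRoot (fab a b)) (v : CotangentSpace (AdjoinRoot (fab a b))),
      IsLocalRing.residue (AdjoinRoot (fab a b)) s0 • v = s0 • v := fun s0 v =>
    algebraMap_smul (IsLocalRing.ResidueField (AdjoinRoot (fab a b))) s0 v
  have hρ : ∀ κ : ResidueField (AdjoinRoot (fab a b)), ∃ r0 : R,
      IsLocalRing.residue _ (algebraMap R (AdjoinRoot (fab a b)) r0) = κ := by
    intro κ
    obtain ⟨s, rfl⟩ := IsLocalRing.residue_surjective (R := AdjoinRoot (fab a b)) κ
    refine ⟨cf a b s, ?_⟩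
    rw [AdjoinRoot.algebraMap_eq]
    have hmem : AdjoinRoot.of (fab a b) (cf a b s) - s
        ∈ maximalIdeal (AdjoinRoot (fab a b)) := by
      rw [mem_maximalIdeal_iff a b ha hb, map_sub, cf_of, sub_self]
      exact zero_mem _
    exact (Ideal.Quotient.mk_eq_mk_iff_sub_mem _ _).mpr hmem
  have hindep : LinearIndependent (ResidueField (AdjoinRoot (fab a b))) u := by
    rw [linearIndependent_iff']
    intro sfin g hsum i hi
    choose r hr using fun j : t => hρ (g j)
    have hgu : ∀ j, g j • u j = r j • u j := by
      intro j
      rw [← hr j, hres']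
      exact algebraMap_smul _ _ _
    have hsum2 : (maximalIdeal (AdjoinRoot (fab a b))).toCotangent
        (∑ j ∈ sfin, r j • z j) = 0 := by
      have he : (maximalIdeal (AdjoinRoot (fab a b))).toCotangent (∑ j ∈ sfin, r j • z j)
          = ∑ j ∈ sfin, g j • u j := by
        rw [map_sum]
        refine Finset.sum_congr rfl fun j _ => ?_
        rw [hgu j]
        exact (LinearMap.map_smul_of_tower _ _ _)
      rw [he, hsum]
    have hmem2 : ((∑ j ∈ sfin, r j • z j : maximalIdeal (AdjoinRoot (fab a b)))
        : AdjoinRoot (fab a b)) ∈ (maximalIdeal (AdjoinRoot (fab a b))) ^ 2 :=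
      (Ideal.toCotangent_eq_zero _ _).mp hsum2
    obtain ⟨hc2, hd2⟩ := hM2 _ hmem2
    have hcfsum : cf a b ((∑ j ∈ sfin, r j • z j : maximalIdeal (AdjoinRoot (fab a b)))
        : AdjoinRoot (fab a b)) = ∑ j ∈ sfin.erase βt, r j * ((w j) : R) := by
      have h0 : cf a b ((∑ j ∈ sfin, r j • z j : maximalIdeal (AdjoinRoot (fab a b)))
          : AdjoinRoot (fab a b)) = cfM (∑ j ∈ sfin, r j • z j) := rfl
      rw [h0, map_sum]
      have h1 : ∀ j ∈ sfin, cfM (r j • z j)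
          = if j = βt then 0 else r j * ((w j) : R) := by
        intro j _
        rw [map_smul, hcfz]
        split <;> simp [smul_eq_mul]
      rw [Finset.sum_congr rfl h1,
        ← Finset.sum_erase (a := βt) sfin
          (f := fun j => if j = βt then 0 else r j * ((w j) : R)) (by simp)]
      exact Finset.sum_congr rfl fun j hj => if_neg (Finset.ne_of_mem_erase hj)
    have hdfsum : df a b ((∑ j ∈ sfin, r j • z j : maximalIdeal (AdjoinRoot (fab a b)))
        : AdjoinRoot (fab a b)) = if βt ∈ sfin then r βt else 0 := by
      have h0 : df a b ((∑ j ∈ sfin, r j • z j : maximalIdeal (AdjoinRoot (fab a b)))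
          : AdjoinRoot (fab a b)) = dfM (∑ j ∈ sfin, r j • z j) := rfl
      rw [h0, map_sum]
      have h1 : ∀ j ∈ sfin, dfM (r j • z j)
          = if j = βt then r j else 0 := by
        intro j _
        rw [map_smul, hdfz]
        split <;> simp [smul_eq_mul]
      rw [Finset.sum_congr rfl h1]
      simp [Finset.sum_ite_eq']
    by_cases hib : i = βt
    · rw [hdfsum, if_pos (hib ▸ hi)] at hd2
      rw [← hr i, hib]
      exact Ideal.Quotient.eq_zero_iff_mem.mpr (of_mem_maximalIdeal a b ha hb hd2)
    · rw [hcfsum] at hc2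
      obtain ⟨z2, hz2, tb, htb, heq⟩ := Submodule.mem_sup.mp hc2
      obtain ⟨t0, rfl⟩ := Ideal.mem_span_singleton'.mp htb
      set ζ : maximalIdeal R := (∑ j ∈ sfin.erase βt, r j • w j) - t0 • ⟨b, hb⟩ with hζdef
      have hζval : (ζ : R) = z2 := by
        have h0 : (ζ : R) = (∑ j ∈ sfin.erase βt, r j * ((w j) : R)) - t0 * b := by
          rw [hζdef]
          push_cast [AddSubmonoidClass.coe_finset_sum, SetLike.val_smul, smul_eq_mul]
          rfl
        rw [h0, ← heq]
        ring
      have hζ0 : (maximalIdeal R).toCotangent ζ = 0 :=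
        (Ideal.toCotangent_eq_zero _ _).mpr (by rw [hζval]; exact hz2)
      rw [hζdef, map_sub, map_sum] at hζ0
      have hζ1 : (∑ j ∈ sfin.erase βt, IsLocalRing.residue R (r j) • ((j : t) : CotangentSpace R))
          - IsLocalRing.residue R t0 • β = 0 := by
        have ha1 : ∑ j ∈ sfin.erase βt, (maximalIdeal R).toCotangent (r j • w j)
            = ∑ j ∈ sfin.erase βt,
                IsLocalRing.residue R (r j) • ((j : t) : CotangentSpace R) :=
          Finset.sum_congr rfl fun j _ => by rw [map_smul, hw1 j, ← hres]
        have ha2 : (maximalIdeal R).toCotangent (t0 • (⟨b, hb⟩ : maximalIdeal R))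
            = IsLocalRing.residue R t0 • β := by
          rw [map_smul, ← hres, hβdef]
        rw [ha1, ha2] at hζ0
        exact hζ0
      have hli : LinearIndependent (ResidueField R)
          (fun i : t => (i : CotangentSpace R)) := by
        have he : (fun i : t => (i : CotangentSpace R)) = ⇑B := (funext hB).symm
        rw [he]
        exact B.linearIndependent
      rw [linearIndependent_iff'] at hli
      have happ := hli (insert βt (sfin.erase βt))
        (Function.update (fun j : t => IsLocalRing.residue R (r j)) βt
          (-(IsLocalRing.residue R t0))) ?_ i
        (Finset.mem_insert_of_mem (Finset.mem_erase.mpr ⟨hib, hi⟩))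
      · rw [Function.update_of_ne hib] at happ
        rw [← hr i]
        exact Ideal.Quotient.eq_zero_iff_mem.mpr (of_mem_maximalIdeal a b ha hb
          (Ideal.Quotient.eq_zero_iff_mem.mp happ))
      · show ∑ j ∈ insert βt (sfin.erase βt),
            (Function.update (fun j : t => IsLocalRing.residue R (r j)) βt
              (-(IsLocalRing.residue R t0))) j • ((j : t) : CotangentSpace R) = 0
        rw [Finset.sum_insert (Finset.notMem_erase _ _), Function.update_self]
        have h2 : ∑ j ∈ sfin.erase βt,
            (Function.update (fun j : t => IsLocalRing.residue R (r j)) βt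
              (-(IsLocalRing.residue R t0))) j • ((j : t) : CotangentSpace R)
            = ∑ j ∈ sfin.erase βt,
                IsLocalRing.residue R (r j) • ((j : t) : CotangentSpace R) :=
          Finset.sum_congr rfl fun j hj => by
            rw [Function.update_of_ne (Finset.ne_of_mem_erase hj)]
        rw [h2]
        have hbv : ((βt : t) : CotangentSpace R) = β := rfl
        rw [hbv, neg_smul, add_comm, ← sub_eq_add_neg]
        exact hζ1
  have lower := hindep.fintype_card_le_finrank
  rw [hcard] at lower
  exact le_antisymm upper lower

end Cot

end Stmt4Aux


open Polynomial IsLocalRing in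
/-- The local statement underlying Proposition 7.4(2): if `(R, m)` is a regular
local ring, `a ∈ m` and `b ∈ m \ m²`, then `S = R[X]/(X² + aX + b)` is a
regular local ring. -/
theorem stmt_4 {R : Type*} [CommRing R] [IsRegularLocalRing' R]
    (a b : R) (ha : a ∈ IsLocalRing.maximalIdeal R)
    (hb : b ∈ IsLocalRing.maximalIdeal R)
    (hb2 : b ∉ (IsLocalRing.maximalIdeal R) ^ 2) :
    IsRegularLocalRing' (Polynomial R ⧸
      Ideal.span {Polynomial.X ^ 2 + Polynomial.C a * Polynomial.X +
        Polynomial.C b}) := by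
  have hreg := ‹IsRegularLocalRing' R›.regular
  haveI hLS : IsLocalRing (AdjoinRoot (Stmt4Aux.fab a b)) := Stmt4Aux.isLocalRing_S a b ha hb
  haveI hNS : IsNoetherianRing (AdjoinRoot (Stmt4Aux.fab a b)) := Stmt4Aux.isNoetherianS a b
  have hdim : ringKrullDim (AdjoinRoot (Stmt4Aux.fab a b)) = ringKrullDim R :=
    Stmt4Aux.dim_eq a b
  have hfr := Stmt4Aux.finrank_eq a b ha hb hb2
  show IsRegularLocalRing' (AdjoinRoot (Stmt4Aux.fab a b))
  exact ⟨by rw [hdim, hreg, hfr]⟩
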